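/- arXiv:2509.19884 — 2 statements merged into one kernel-verified Lean document; each statement's English description precedes it below -/
import Mathlib

section
/- For a single group h, max over interval indicators g of Δ_{h,g}(f) = (n_h/n)·ECCE_h(f), where Δ_{h,g}(f) = |(1/n)·Σ_k h(x_k)·g(f(x_k))·(y_k - f(x_k))|, n_h = |{k : h(x_k)=1}|, and ECCE_h(f) is the ECCE on the subsample where h(x_k)=1. -/
/-- `g` is the indicator of an interval `I ⊆ [0,1]`. -/
def IsIntervalIndicator (g : ℝ → ℝ) : Prop :=
  ∃ I : Set ℝ, I ⊆ Set.Icc 0 1 ∧ I.OrdConnected ∧ g = I.indicator fun _ => 1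

/-- The multicalibration deviation `Δ_{h,g}(f)`. -/
noncomputable def mcDev {X : Type*} (n : ℕ) (x : Fin n → X) (y : Fin n → ℝ)
    (f : X → ℝ) (h : X → ℝ) (g : ℝ → ℝ) : ℝ :=
  |(1 / n : ℝ) * ∑ k, h (x k) * g (f (x k)) * (y k - f (x k))|

/-- ECCE of a (sorted) sample of size `m`: `(1/m)` times the maximum over contiguous
index intervals of the absolute sum of residuals. -/
noncomputable def ecce (m : ℕ) (y f : Fin m → ℝ) : ℝ :=
  (1 / m : ℝ) *
    sSup {v : ℝ | ∃ i j : Fin m, i ≤ j ∧ v = |∑ k ∈ Finset.Icc i j, (y k - f k)|}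

/-- For a single group `h`, `max_g Δ_{h,g}(f) = (n_h/n)·ECCE_h(f)`, where the subsample
`{k : h(x_k)=1}` of size `m = n_h` is enumerated by `e` in increasing prediction order
with distinct prediction values. -/
theorem sup_mcDev_eq_ecce_group {X : Type*} (n m : ℕ) (hn : 0 < n) (hm : 0 < m)
    (x : Fin n → X) (y : Fin n → ℝ) (f : X → ℝ) (h : X → ℝ)
    (hbin : ∀ v, h v = 0 ∨ h v = 1) (hy : ∀ k, y k = 0 ∨ y k = 1)
    (hf : ∀ v, f v ∈ Set.Icc (0 : ℝ) 1)
    (e : Fin m → Fin n) (hinj : Function.Injective e)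
    (hrange : ∀ k : Fin n, h (x k) = 1 ↔ ∃ i, e i = k)
    (hmono : Monotone fun i => f (x (e i)))
    (hfinj : Function.Injective fun i => f (x (e i))) :
    sSup {v : ℝ | ∃ g : ℝ → ℝ, IsIntervalIndicator g ∧ v = mcDev n x y f h g} =
      ((m : ℝ) / n) * ecce m (fun i => y (e i)) (fun i => f (x (e i))) := by
  classical
  have hsm : StrictMono (fun i => f (x (e i))) := hmono.strictMono_of_injective hfinj
  set F : Fin m → ℝ := fun i => f (x (e i)) with hFdef
  set Y : Fin m → ℝ := fun i => y (e i) with hYdef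
  set SR : Set ℝ :=
    {v : ℝ | ∃ i j : Fin m, i ≤ j ∧ v = |∑ k ∈ Finset.Icc i j, (Y k - F k)|} with hSRdef
  set SL : Set ℝ :=
    {v : ℝ | ∃ g : ℝ → ℝ, IsIntervalIndicator g ∧ v = mcDev n x y f h g} with hSLdef
  have hn0 : (n : ℝ) ≠ 0 := Nat.cast_ne_zero.mpr hn.ne'
  have hm0 : (m : ℝ) ≠ 0 := Nat.cast_ne_zero.mpr hm.ne'
  have hninv : (0 : ℝ) ≤ 1 / n := by positivity
  -- sum reduction to the subsample
  have hsum : ∀ g : ℝ → ℝ, ∑ k, h (x k) * g (f (x k)) * (y k - f (x k))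
      = ∑ i, g (F i) * (Y i - F i) := by
    intro g
    have h1 : ∀ k : Fin n, h (x k) * g (f (x k)) * (y k - f (x k))
        = if h (x k) = 1 then g (f (x k)) * (y k - f (x k)) else 0 := by
      intro k
      rcases hbin (x k) with h0 | h1
      · rw [h0]; norm_num
      · rw [h1]; norm_num
    rw [Finset.sum_congr rfl fun k _ => h1 k, ← Finset.sum_filter]
    have hfe : Finset.univ.filter (fun k => h (x k) = 1) = Finset.univ.image e := by
      ext k
      simp [hrange k, eq_comm]
    rw [hfe, Finset.sum_image (fun a _ b _ hab => hinj hab)]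
  -- SR facts
  have i0 : Fin m := ⟨0, hm⟩
  have hne_R : SR.Nonempty := ⟨_, ⟨i0, i0, le_refl i0, rfl⟩⟩
  have hfin_R : SR.Finite := by
    apply Set.Finite.subset
      (Set.finite_range (fun p : Fin m × Fin m => |∑ k ∈ Finset.Icc p.1 p.2, (Y k - F k)|))
    rintro v ⟨i, j, _, rfl⟩
    exact ⟨(i, j), rfl⟩
  have hbdd_R : BddAbove SR := hfin_R.bddAbove
  have hsupR_nonneg : 0 ≤ sSup SR := by
    obtain ⟨w, hw⟩ := hne_R
    refine le_trans ?_ (le_csSup hbdd_R hw)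
    obtain ⟨i, j, _, rfl⟩ := hw
    exact abs_nonneg _
  -- forward: every element of SL is (1/n) * w with w = 0 or w ∈ SR
  have hfwd : ∀ v ∈ SL, ∃ w, (w = 0 ∨ w ∈ SR) ∧ v = (1 / n) * w := by
    rintro v ⟨g, ⟨I, hI01, hIoc, rfl⟩, rfl⟩
    have hg : ∀ r, I.indicator (fun _ => (1:ℝ)) r = if r ∈ I then 1 else 0 := by
      intro r; simp [Set.indicator_apply]
    have hsum2 : ∑ i, I.indicator (fun _ => (1:ℝ)) (F i) * (Y i - F i)
        = ∑ i ∈ Finset.univ.filter (fun i => F i ∈ I), (Y i - F i) := by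
      rw [Finset.sum_filter]
      refine Finset.sum_congr rfl fun i _ => ?_
      rw [hg]
      by_cases hi : F i ∈ I <;> simp [hi]
    rw [mcDev, hsum, hsum2]
    set T := Finset.univ.filter (fun i => F i ∈ I) with hT
    rcases T.eq_empty_or_nonempty with hTe | hTne
    · refine ⟨0, Or.inl rfl, ?_⟩
      rw [hTe]
      simp
    · set a := T.min' hTne with ha
      set b := T.max' hTne with hb
      have hab : a ≤ b := T.min'_le _ (T.max'_mem hTne)
      have haI : F a ∈ I := by
        have h' : a ∈ Finset.filter (fun i => F i ∈ I) Finset.univ := T.min'_mem hTne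
        exact (Finset.mem_filter.mp h').2
      have hbI : F b ∈ I := by
        have h' : b ∈ Finset.filter (fun i => F i ∈ I) Finset.univ := T.max'_mem hTne
        exact (Finset.mem_filter.mp h').2
      have hTI : T = Finset.Icc a b := by
        ext i
        simp only [hT, Finset.mem_filter, Finset.mem_univ, true_and, Finset.mem_Icc]
        constructor
        · intro hi
          exact ⟨T.min'_le i (by simp [hT, hi]), T.le_max' i (by simp [hT, hi])⟩
        · rintro ⟨hai, hib⟩
          exact hIoc.out haI hbI ⟨hsm.monotone hai, hsm.monotone hib⟩
      refine ⟨|∑ k ∈ Finset.Icc a b, (Y k - F k)|, Or.inr ⟨a, b, hab, rfl⟩, ?_⟩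
      rw [hTI, abs_mul, abs_of_nonneg hninv]
  -- backward: (1/n) * w ∈ SL for w ∈ SR, and 0 ∈ SL
  have h0L : (0 : ℝ) ∈ SL := by
    refine ⟨(∅ : Set ℝ).indicator (fun _ => 1),
      ⟨∅, Set.empty_subset _, Set.ordConnected_empty, rfl⟩, ?_⟩
    simp [mcDev]
  have hbwd : ∀ w ∈ SR, (1 / n : ℝ) * w ∈ SL := by
    rintro w ⟨i, j, hij, rfl⟩
    refine ⟨(Set.Icc (F i) (F j)).indicator (fun _ => 1),
      ⟨Set.Icc (F i) (F j), Set.Icc_subset_Icc (hf _).1 (hf _).2,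
        Set.ordConnected_Icc, rfl⟩, ?_⟩
    have hg : ∀ k : Fin m, (Set.Icc (F i) (F j)).indicator (fun _ => (1:ℝ)) (F k)
        = if k ∈ Finset.Icc i j then 1 else 0 := by
      intro k
      have : F k ∈ Set.Icc (F i) (F j) ↔ k ∈ Finset.Icc i j := by
        simp [Set.mem_Icc, Finset.mem_Icc, hsm.le_iff_le]
      simp [Set.indicator_apply, this]
    rw [mcDev, hsum]
    have : ∑ k, (Set.Icc (F i) (F j)).indicator (fun _ => (1:ℝ)) (F k) * (Y k - F k)
        = ∑ k ∈ Finset.Icc i j, (Y k - F k) := by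
      rw [Finset.sum_congr rfl fun k _ => by rw [hg k, ite_mul, one_mul, zero_mul]]
      rw [← Finset.sum_filter]
      congr 1
      ext k
      simp
    rw [this, abs_mul, abs_of_nonneg hninv]
  -- conclude
  have hlub : IsLUB SL ((1 / n : ℝ) * sSup SR) := by
    constructor
    · rintro v hv
      obtain ⟨w, hw, rfl⟩ := hfwd v hv
      have hwle : w ≤ sSup SR := by
        rcases hw with rfl | hw
        · exact hsupR_nonneg
        · exact le_csSup hbdd_R hw
      exact mul_le_mul_of_nonneg_left hwle hninv
    · intro c hc
      have hle : sSup SR ≤ n * c := by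
        apply csSup_le hne_R
        intro w hw
        have := hc (hbwd w hw)
        calc w = n * ((1 / n : ℝ) * w) := by field_simp
          _ ≤ n * c := by
            apply mul_le_mul_of_nonneg_left this (by positivity)
      calc (1 / n : ℝ) * sSup SR ≤ (1 / n : ℝ) * (n * c) :=
            mul_le_mul_of_nonneg_left hle hninv
        _ = c := by field_simp
  rw [hlub.csSup_eq ⟨0, h0L⟩, ecce]
  rw [hSRdef]
  field_simp
end

section
/- Let ℒ(F,y) be the logistic log loss and suppose, for random variables X, Y with Y ∈ {0,1}, a predictor F_t and a correction direction W(X) with E[W(X)²] > 0. Set w* = E[(Y - σ(F_t(X)))·W(X)]/E[W(X)²]. Then E[ℒ(F_t(X),Y)] - E[ℒ(F_t(X) + w*·W(X), Y)] ≥ (1 - 1/4)·E[(Y - σ(F_t(X)))·W(X)]²/E[W(X)²] = (3/4)·E[(Y-σ(F_t(X)))W(X)]²/E[W(X)²]. -/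
noncomputable def sigmoid (F : ℝ) : ℝ := 1 / (1 + Real.exp (-F))

noncomputable def logloss (F y : ℝ) : ℝ :=
  -(y * Real.log (sigmoid F) + (1 - y) * Real.log (1 - sigmoid F))

/-- Expectation over a finite probability space with weights `p`. -/
noncomputable def expect {Ω : Type*} [Fintype Ω] (p : Ω → ℝ) (Z : Ω → ℝ) : ℝ :=
  ∑ ω, p ω * Z ω

lemma sigmoid_pos (x : ℝ) : 0 < sigmoid x := by unfold sigmoid; positivity
lemma sigmoid_lt_one (x : ℝ) : sigmoid x < 1 := by
  unfold sigmoid; rw [div_lt_one (by positivity)]; linarith [Real.exp_pos (-x)]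
lemma one_sub_sigmoid (x : ℝ) : 1 - sigmoid x = sigmoid (-x) := by
  unfold sigmoid
  rw [neg_neg]
  have h1 : Real.exp (-x) * Real.exp x = 1 := by rw [← Real.exp_add]; simp
  have h2 : (0:ℝ) < 1 + Real.exp (-x) := by positivity
  have h3 : (0:ℝ) < 1 + Real.exp x := by positivity
  field_simp
  nlinarith [h1]
lemma hasDerivAt_sigmoid (x : ℝ) :
    HasDerivAt sigmoid (sigmoid x * (1 - sigmoid x)) x := by
  have h1 : HasDerivAt (fun x : ℝ => 1 + Real.exp (-x)) (-Real.exp (-x)) x := by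
    simpa using ((Real.hasDerivAt_exp (-x)).comp x (hasDerivAt_neg x)).const_add 1
  have h2 := h1.inv (by positivity)
  have heq : sigmoid = fun x : ℝ => (1 + Real.exp (-x))⁻¹ := by
    funext y; simp [sigmoid, one_div]
  rw [heq]
  refine h2.congr_deriv ?_
  beta_reduce
  have hx : (0:ℝ) < 1 + Real.exp (-x) := by positivity
  field_simp [sigmoid]
  ring

lemma sigmoid_lipschitz (a b : ℝ) : |sigmoid a - sigmoid b| ≤ |a - b| / 4 := by
  have h := Convex.norm_image_sub_le_of_norm_deriv_le (f := sigmoid) (s := Set.univ)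
    (C := 1/4)
    (fun x _ => (hasDerivAt_sigmoid x).differentiableAt)
    (fun x _ => by
      rw [(hasDerivAt_sigmoid x).deriv]
      rw [Real.norm_eq_abs, abs_of_nonneg (by nlinarith [sigmoid_pos x, sigmoid_lt_one x])]
      nlinarith [sq_nonneg (sigmoid x - 1/2)])
    convex_univ (Set.mem_univ b) (Set.mem_univ a)
  rw [Real.norm_eq_abs, Real.norm_eq_abs] at h
  linarith

lemma log_sigmoid_bound (a h : ℝ) :
    Real.log (sigmoid (a + h)) - Real.log (sigmoid a) ≥ sigmoid (-a) * h - h ^ 2 / 4 := by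
  set φ : ℝ → ℝ := fun t => Real.log (sigmoid (a + t)) - sigmoid (-a) * t + t ^ 2 / 4 with hφ
  have hd : ∀ t : ℝ, HasDerivAt φ (sigmoid (-(a + t)) - sigmoid (-a) + t / 2) t := by
    intro t
    have h1 : HasDerivAt (fun t : ℝ => a + t) 1 t := by
      simpa using (hasDerivAt_id t).const_add a
    have h2 : HasDerivAt (fun t : ℝ => sigmoid (a + t))
        (sigmoid (a + t) * (1 - sigmoid (a + t))) t := by
      exact ((hasDerivAt_sigmoid (a + t)).comp t h1).congr_deriv (mul_one _)
    have h3 := h2.log (sigmoid_pos (a + t)).ne'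
    have h4 : HasDerivAt (fun t : ℝ => sigmoid (-a) * t) (sigmoid (-a)) t := by
      simpa using (hasDerivAt_id t).const_mul (sigmoid (-a))
    have h5 : HasDerivAt (fun t : ℝ => t ^ 2 / 4) (t / 2) t := by
      have := (hasDerivAt_pow 2 t).div_const 4
      refine this.congr_deriv ?_
      ring
    have hc : sigmoid (a + t) * (1 - sigmoid (a + t)) / sigmoid (a + t) = sigmoid (-(a + t)) := by
      rw [mul_comm, mul_div_assoc, div_self (sigmoid_pos (a + t)).ne', mul_one, one_sub_sigmoid]
    have := (h3.sub h4).add h5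
    rw [hc] at this
    exact this
  have hdiff : Differentiable ℝ φ := fun t => (hd t).differentiableAt
  have bound : ∀ x y : ℝ, |sigmoid (-(a + x)) - sigmoid (-a)| ≤ |x| / 4 := by
    intro x y
    have := sigmoid_lipschitz (-(a + x)) (-a)
    have he : |-(a + x) - -a| = |x| := by rw [show -(a+x) - -a = -x by ring, abs_neg]
    rwa [he] at this
  have mono : MonotoneOn φ (Set.Ici 0) := by
    apply monotoneOn_of_deriv_nonneg (convex_Ici 0) hdiff.continuous.continuousOn
      hdiff.differentiableOn
    intro x hx
    rw [interior_Ici] at hx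
    rw [(hd x).deriv]
    have hb := bound x x
    rw [abs_of_pos (Set.mem_Ioi.mp hx)] at hb
    have := abs_le.mp hb
    linarith [this.1]
  have anti : AntitoneOn φ (Set.Iic 0) := by
    apply antitoneOn_of_deriv_nonpos (convex_Iic 0) hdiff.continuous.continuousOn
      hdiff.differentiableOn
    intro x hx
    rw [interior_Iic] at hx
    rw [(hd x).deriv]
    have hb := bound x x
    rw [abs_of_neg (Set.mem_Iio.mp hx)] at hb
    have := abs_le.mp hb
    linarith [this.2]
  have key : φ h ≥ φ 0 := by
    rcases le_or_gt 0 h with hh | hh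
    · exact mono Set.self_mem_Ici hh hh
    · exact anti hh.le Set.self_mem_Iic hh.le
  simp only [hφ] at key
  simp at key
  linarith [key]

lemma logloss_step (F y h : ℝ) (hy : y = 0 ∨ y = 1) :
    logloss F y - logloss (F + h) y ≥ (y - sigmoid F) * h - 1 / 4 * h ^ 2 := by
  rcases hy with rfl | rfl
  · simp only [logloss, zero_mul, sub_zero, one_mul, zero_add, zero_sub]
    rw [one_sub_sigmoid, one_sub_sigmoid]
    have hkey := log_sigmoid_bound (-F) (-h)
    rw [show -F + -h = -(F + h) by ring] at hkey
    rw [neg_neg] at hkey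
    nlinarith [hkey]
  · simp only [logloss, one_mul, sub_self, zero_mul, add_zero]
    have hkey := log_sigmoid_bound F h
    rw [one_sub_sigmoid] at *
    nlinarith [hkey]

/-- Adding the optimally scaled correction direction `w*·W` to the logit decreases
the expected log loss by at least `(3/4)·E[(Y-σ(F_t))W]²/E[W²]`. -/
theorem logloss_decrease_optimal_step {Ω : Type*} [Fintype Ω] (p : Ω → ℝ)
    (hp : ∀ ω, 0 ≤ p ω) (hp1 : ∑ ω, p ω = 1)
    (Ft W Y : Ω → ℝ) (hY : ∀ ω, Y ω = 0 ∨ Y ω = 1)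
    (hW2 : 0 < expect p (fun ω => W ω ^ 2)) :
    expect p (fun ω => logloss (Ft ω) (Y ω)) -
        expect p (fun ω => logloss
          (Ft ω + (expect p (fun ω => (Y ω - sigmoid (Ft ω)) * W ω) /
            expect p (fun ω => W ω ^ 2)) * W ω) (Y ω)) ≥
      (1 - 1 / 4) * (expect p (fun ω => (Y ω - sigmoid (Ft ω)) * W ω)) ^ 2 /
        expect p (fun ω => W ω ^ 2) := by
  set A := expect p (fun ω => (Y ω - sigmoid (Ft ω)) * W ω) with hA
  set B := expect p (fun ω => W ω ^ 2) with hB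
  set c := A / B with hc
  have hsum : expect p (fun ω => logloss (Ft ω) (Y ω)) -
      expect p (fun ω => logloss (Ft ω + c * W ω) (Y ω)) =
      ∑ ω, p ω * (logloss (Ft ω) (Y ω) - logloss (Ft ω + c * W ω) (Y ω)) := by
    simp [expect, mul_sub, Finset.sum_sub_distrib]
  rw [hsum]
  have h1 : ∑ ω, p ω * ((Y ω - sigmoid (Ft ω)) * (c * W ω) - 1 / 4 * (c * W ω) ^ 2)
      = c * A - 1 / 4 * c ^ 2 * B := by
    rw [hA, hB]
    simp only [expect, Finset.mul_sum]
    rw [← Finset.sum_sub_distrib]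
    apply Finset.sum_congr rfl
    intro ω _
    ring
  have h2 : ∑ ω, p ω * (logloss (Ft ω) (Y ω) - logloss (Ft ω + c * W ω) (Y ω)) ≥
      ∑ ω, p ω * ((Y ω - sigmoid (Ft ω)) * (c * W ω) - 1 / 4 * (c * W ω) ^ 2) := by
    apply Finset.sum_le_sum
    intro ω _
    exact mul_le_mul_of_nonneg_left (logloss_step (Ft ω) (Y ω) (c * W ω) (hY ω)) (hp ω)
  have h3 : c * A - 1 / 4 * c ^ 2 * B = (1 - 1 / 4) * A ^ 2 / B := by
    rw [hc]
    field_simp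
  linarith [h2, h1.symm.le]
end
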